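/- Let a be real and λ > 0, and set β = ia/(2√λ). For ℓ = 1, the expression r₁(λ)/3 := b·∑_{j=1}^{1} 1/(j-β) + c + b·i√λ/a equals -aλ/36, where b = (-2i√λ)³·(-1-β)₃/(3!)² and c = ((i√λ)³/3!)·∑_{k=0}^{2} 2^k·(-1-β)_k/(k!(3-k)). In particular this expression is real. -/

import Mathlib

open Finset

set_option maxHeartbeats 1000000 in
/-- the ℓ = 1 case of equation (2.1):
`b·∑_{j=1}^{1} 1/(j-β) + c + b·i√λ/a = -aλ/36`, in particular a real number. -/
theorem stmt_6 (a lam : ℝ) (hlam : 0 < lam) (ha : a ≠ 0) :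
    let sl : ℂ := (Real.sqrt lam : ℂ)
    let β : ℂ := Complex.I * (a : ℂ) / (2 * sl)
    let b : ℂ := (-2 * Complex.I * sl) ^ 3 * (ascPochhammer ℂ 3).eval (-1 - β) /
      ((Nat.factorial 3 : ℂ)) ^ 2
    let c : ℂ := (Complex.I * sl) ^ 3 / (Nat.factorial 3 : ℂ) *
      ∑ k ∈ range 3, 2 ^ k * (ascPochhammer ℂ k).eval (-1 - β) /
        ((Nat.factorial k : ℂ) * ((3 : ℂ) - (k : ℂ)))
    b * (∑ j ∈ Icc (1 : ℕ) 1, 1 / ((j : ℂ) - β)) + c + b * Complex.I * sl / (a : ℂ) =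
      ((-(a * lam) / 36 : ℝ) : ℂ) := by
  intro sl β b c
  have hslpos : 0 < Real.sqrt lam := Real.sqrt_pos.mpr hlam
  have hs : sl ≠ 0 := by
    simp only [sl, ne_eq, Complex.ofReal_eq_zero]; exact hslpos.ne'
  have hs2 : sl ^ 2 = (lam : ℂ) := by
    simp only [sl]; norm_cast; exact Real.sq_sqrt hlam.le
  have hA : (a : ℂ) ≠ 0 := by exact_mod_cast ha
  have e3 : Complex.I ^ 3 = -Complex.I := by
    rw [pow_succ, Complex.I_sq]; ring
  have e4 : Complex.I ^ 4 = 1 := Complex.I_pow_four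
  have e5 : Complex.I ^ 5 = Complex.I := by rw [pow_succ, e4]; ring
  have e6 : Complex.I ^ 6 = -1 := by rw [pow_succ, e5, Complex.I_mul_I]
  have h1β : (1 : ℂ) - β ≠ 0 := by
    intro h
    have hb1 : β = 1 := by linear_combination -h
    have h2 : Complex.I * (a : ℂ) = 2 * sl := by
      exact (show β * (2*sl) = Complex.I * a from div_mul_cancel₀ _ (mul_ne_zero two_ne_zero hs)).symm.trans (by rw [hb1, one_mul])
    have h3 : -((a : ℂ)^2) = 4 * lam := by
      have := congrArg (· ^ 2) h2
      calc -((a : ℂ)^2) = (Complex.I * a)^2 := by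
            rw [mul_pow, Complex.I_sq]; ring
        _ = (2 * sl)^2 := this
        _ = 4 * lam := by rw [mul_pow, hs2]; ring
    have h4 : -(a^2) = 4 * lam := by exact_mod_cast h3
    nlinarith [sq_nonneg a]
  have hβ2 : β * (2 * sl) = Complex.I * a :=
    div_mul_cancel₀ _ (mul_ne_zero two_ne_zero hs)
  have hIsβ : Complex.I * sl * β = -((a : ℂ) / 2) := by
    linear_combination (Complex.I / 2) * hβ2 + ((a : ℂ) / 2) * Complex.I_sq
  have hb : b = -((a : ℂ) * sl ^ 2 / 9) * ((1 - β) * (1 + β)) := by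
    simp only [b, ascPochhammer_succ_eval, ascPochhammer_zero, Polynomial.eval_one,
      Nat.factorial]
    push_cast
    field_simp [β, hs]
    ring_nf
    simp only [e3, e4, e5, e6, Complex.I_sq]
    ring_nf
    field_simp [hs]
    linear_combination (72 - 72*β^2) * hIsβ
  have hc : c = -(Complex.I * sl ^ 3 / 6) * (-2/3 + β + 2 * β ^ 2) := by
    simp only [c, Finset.sum_range_succ, Finset.sum_range_zero,
      ascPochhammer_succ_eval, ascPochhammer_zero, Polynomial.eval_one, Nat.factorial]
    push_cast
    field_simp [β, hs]
    ring_nf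
    simp only [e3, e4, e5, e6, Complex.I_sq]
    ring_nf
  have hsum : (∑ j ∈ Icc (1 : ℕ) 1, 1 / ((j : ℂ) - β)) = 1 / (1 - β) := by
    simp
  have hbdiv : b * (1 / (1 - β)) = -((a : ℂ) * sl ^ 2 / 9) * (1 + β) := by
    rw [hb]
    field_simp
  have hba : b * Complex.I * sl / (a : ℂ) = -(Complex.I * sl ^ 3 / 9) * (1 - β ^ 2) := by
    rw [hb]
    field_simp
    ring
  rw [hsum, hbdiv, hba, hc]
  rw [show ((-(a * lam) / 36 : ℝ) : ℂ) = -((a : ℂ) * lam) / 36 by push_cast; ring, ← hs2]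
  linear_combination (-(sl ^ 2) / 6 - 2 * sl ^ 2 * β / 9) * hIsβ
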